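/- Let n be a real number. For every L > 0, every positive integer N with h = L/N, every N-periodic sequence u with u_i > 0 for all i, and every N-periodic sequence v, one has the identity A_Δ^h(u, v) = A_∇^h(u, v). -/
import Mathlib


open Finset

/-- Forward difference quotient `d_i = (u_{i+1} - u_i)/h`. -/
noncomputable def dq (h : ℝ) (u : ℤ → ℝ) (i : ℤ) : ℝ := (u (i + 1) - u i) / h

/-- The discrete operator `A_Δ^h(u,v)`. -/
noncomputable def Adelta (n h : ℝ) (N : ℕ) (u v : ℤ → ℝ) : ℝ :=
  -((n - 2) / 6) * h * (∑ i ∈ Icc (1 : ℤ) (N : ℤ),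
      u i ^ (n - 3) * ((dq h u (i - 1)) ^ 2 + (dq h u i) ^ 2) * v i)
  - (n - 2) / 6 * h * (∑ i ∈ Icc (1 : ℤ) (N : ℤ),
      ((u i ^ (n - 3) + u (i + 1) ^ (n - 3)) * dq h u i
        + (u (i - 1) ^ (n - 3) + u i ^ (n - 3)) * dq h u (i - 1))
      * ((u (i + 1) - u (i - 1)) / (2 * h)) * v i)

/-- The discrete operator `A_∇^h(u,v)`. -/
noncomputable def Anabla (n h : ℝ) (N : ℕ) (u v : ℤ → ℝ) : ℝ :=
  -((n - 2) / 12) * h * (∑ i ∈ Icc (1 : ℤ) (N : ℤ),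
      ((u i ^ (n - 3) + u (i + 1) ^ (n - 3)) * (dq h u i) ^ 2
        + (u i ^ (n - 3) + u (i - 1) ^ (n - 3)) * (dq h u (i - 1)) ^ 2) * v i)
  - (n - 2) / 24 * h * (∑ i ∈ Icc (1 : ℤ) (N : ℤ),
      (u (i + 1) ^ (n - 3) + 2 * u i ^ (n - 3) + u (i - 1) ^ (n - 3))
        * ((u (i + 1) - u (i - 1)) / h) ^ 2 * v i)
  - (n - 2) / 24 * h * (∑ i ∈ Icc (1 : ℤ) (N : ℤ),
      (2 * u i ^ (n - 3) - u (i + 1) ^ (n - 3) - u (i - 1) ^ (n - 3))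
        * ((dq h u i) ^ 2 + (dq h u (i - 1)) ^ 2) * v i)

/-- the identity `A_Δ^h(u,v) = A_∇^h(u,v)`. -/
theorem statement3 (n : ℝ) :
    ∀ (L : ℝ) (hL : 0 < L) (N : ℕ) (hN : 0 < N) (h : ℝ) (hh : h = L / N)
      (u : ℤ → ℝ) (hperu : ∀ i : ℤ, u (i + (N : ℤ)) = u i) (hpos : ∀ i : ℤ, 0 < u i)
      (v : ℤ → ℝ) (hperv : ∀ i : ℤ, v (i + (N : ℤ)) = v i),
      Adelta n h N u v = Anabla n h N u v := by
  intro L hL N hN h hh u hperu hpos v hperv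
  have hN' : (0:ℝ) < N := by exact_mod_cast hN
  have hh0 : h ≠ 0 := by rw [hh]; exact ne_of_gt (div_pos hL hN')
  unfold Adelta Anabla dq
  simp only [Finset.mul_sum, ← Finset.sum_sub_distrib]
  apply Finset.sum_congr rfl
  intro i _
  field_simp
  ring
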